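/- Let f, h : [0,ρ] → ℝ satisfy f'' = −K(t)·f and h'' = −h with K(t) ≤ 1 for all t, f(0) = h(0) = 0, f(ρ) = h(ρ) = L > 0, where 0 < ρ < π. Then f(t) ≤ h(t) = (L/sin ρ)·sin t for all t ∈ [0,ρ]; in particular if ρ ≤ 1 then f(t) ≤ L for all t ∈ [0,ρ]. -/

import Mathlib

/-- Sturm comparison: if `f'' = -K f` with `K ≤ 1`, `f 0 = 0`, `f ρ = L > 0`,
`f > 0` on `(0,ρ)` with `0 < ρ < π`, then `f t ≤ (L / sin ρ) sin t` on `[0,ρ]`;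
in particular if `ρ ≤ 1` then `f t ≤ L`. -/
theorem stmt8 (ρ L : ℝ) (hρ : ρ ∈ Set.Ioo 0 Real.pi) (hL : 0 < L)
    (K f : ℝ → ℝ) (hKcont : ContinuousOn K (Set.Icc 0 ρ))
    (hK : ∀ s ∈ Set.Icc 0 ρ, K s ≤ 1)
    (hfd : ∀ s ∈ Set.Icc 0 ρ, DifferentiableAt ℝ f s)
    (hfd' : ∀ s ∈ Set.Icc 0 ρ, DifferentiableAt ℝ (deriv f) s)
    (hode : ∀ s ∈ Set.Icc 0 ρ, deriv (deriv f) s = -K s * f s)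
    (hf0 : f 0 = 0) (hfρ : f ρ = L)
    (hfpos : ∀ s ∈ Set.Ioo 0 ρ, 0 < f s) :
    (∀ s ∈ Set.Icc 0 ρ, f s ≤ (L / Real.sin ρ) * Real.sin s) ∧
    (ρ ≤ 1 → ∀ s ∈ Set.Icc 0 ρ, f s ≤ L) := by
  obtain ⟨hρ0, hρπ⟩ := hρ
  have hf_nonneg : ∀ s ∈ Set.Icc 0 ρ, 0 ≤ f s := by
    intro s hs
    rcases eq_or_lt_of_le hs.1 with h0 | h0
    · simp [← h0, hf0]
    rcases eq_or_lt_of_le hs.2 with h1 | h1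
    · rw [h1, hfρ]; exact hL.le
    · exact (hfpos s ⟨h0, h1⟩).le
  have hsin_nonneg : ∀ s ∈ Set.Icc 0 ρ, 0 ≤ Real.sin s := fun s hs =>
    Real.sin_nonneg_of_nonneg_of_le_pi hs.1 (hs.2.trans hρπ.le)
  have hsinρ : 0 < Real.sin ρ := Real.sin_pos_of_pos_of_lt_pi hρ0 hρπ
  set W : ℝ → ℝ := fun t => f t * Real.cos t - deriv f t * Real.sin t with hWdef
  have hWderiv : ∀ s ∈ Set.Icc 0 ρ, HasDerivAt W ((K s - 1) * f s * Real.sin s) s := by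
    intro s hs
    have h1 : HasDerivAt f (deriv f s) s := (hfd s hs).hasDerivAt
    have h2 : HasDerivAt (deriv f) (-K s * f s) s := by
      have := (hfd' s hs).hasDerivAt
      rwa [hode s hs] at this
    have h3 := (h1.mul (Real.hasDerivAt_cos s)).sub (h2.mul (Real.hasDerivAt_sin s))
    refine h3.congr_deriv ?_
    ring
  have hWcont : ContinuousOn W (Set.Icc 0 ρ) := fun s hs =>
    ((hWderiv s hs).differentiableAt.continuousAt).continuousWithinAt
  have hWanti : AntitoneOn W (Set.Icc 0 ρ) := by
    apply antitoneOn_of_deriv_nonpos (convex_Icc 0 ρ) hWcont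
    · intro s hs
      rw [interior_Icc] at hs
      exact (hWderiv s (Set.mem_Icc_of_Ioo hs)).differentiableAt.differentiableWithinAt
    · intro s hs
      rw [interior_Icc] at hs
      have hs' := Set.mem_Icc_of_Ioo hs
      rw [(hWderiv s hs').deriv]
      have h4 := hK s hs'
      nlinarith [mul_nonneg (hf_nonneg s hs') (hsin_nonneg s hs'), hf_nonneg s hs', hsin_nonneg s hs']
  have hW0 : W 0 = 0 := by simp [hWdef, hf0]
  have hWle : ∀ s ∈ Set.Icc 0 ρ, W s ≤ 0 := by
    intro s hs
    have := hWanti (Set.left_mem_Icc.mpr hρ0.le) hs hs.1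
    rwa [hW0] at this
  have main : ∀ s ∈ Set.Icc 0 ρ, f s ≤ (L / Real.sin ρ) * Real.sin s := by
    intro s hs
    rcases eq_or_lt_of_le hs.1 with h0 | h0
    · simp [← h0, hf0]
    set g : ℝ → ℝ := fun t => f t / Real.sin t with hgdef
    have hsub : Set.Icc s ρ ⊆ Set.Icc 0 ρ := Set.Icc_subset_Icc h0.le le_rfl
    have hsint : ∀ t ∈ Set.Icc s ρ, 0 < Real.sin t := fun t ht =>
      Real.sin_pos_of_pos_of_lt_pi (lt_of_lt_of_le h0 ht.1) (lt_of_le_of_lt ht.2 hρπ)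
    have hgderiv : ∀ t ∈ Set.Icc s ρ, HasDerivAt g (-W t / (Real.sin t)^2) t := by
      intro t ht
      have h1 : HasDerivAt f (deriv f t) t := (hfd t (hsub ht)).hasDerivAt
      have h5 := h1.div (Real.hasDerivAt_sin t) (hsint t ht).ne'
      refine h5.congr_deriv ?_
      simp only [hWdef]
      ring
    have hgmono : MonotoneOn g (Set.Icc s ρ) := by
      apply monotoneOn_of_deriv_nonneg (convex_Icc s ρ)
      · exact fun t ht => ((hgderiv t ht).differentiableAt.continuousAt).continuousWithinAt
      · intro t ht
        rw [interior_Icc] at ht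
        exact (hgderiv t (Set.mem_Icc_of_Ioo ht)).differentiableAt.differentiableWithinAt
      · intro t ht
        rw [interior_Icc] at ht
        have ht' := Set.mem_Icc_of_Ioo ht
        rw [(hgderiv t ht').deriv]
        have := hWle t (hsub ht')
        apply div_nonneg (by linarith) (sq_nonneg _)
    have hg : g s ≤ g ρ := hgmono ⟨le_refl s, hs.2⟩ ⟨hs.2, le_refl ρ⟩ hs.2
    have hsins : 0 < Real.sin s := hsint s ⟨le_refl s, hs.2⟩
    have : f s / Real.sin s ≤ L / Real.sin ρ := by
      simpa [hgdef, hfρ] using hg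
    calc f s = (f s / Real.sin s) * Real.sin s := by field_simp
    _ ≤ (L / Real.sin ρ) * Real.sin s := by
        exact mul_le_mul_of_nonneg_right this hsins.le
  refine ⟨main, fun hρ1 s hs => ?_⟩
  have h1 : Real.sin s ≤ Real.sin ρ := by
    apply Real.strictMonoOn_sin.monotoneOn ⟨?_, ?_⟩ ⟨?_, ?_⟩ hs.2
    · linarith [Real.pi_pos, hs.1]
    · linarith [Real.pi_gt_three, hs.2, hρ1]
    · linarith [Real.pi_pos]
    · linarith [Real.pi_gt_three]
  calc f s ≤ (L / Real.sin ρ) * Real.sin s := main s hs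
  _ ≤ (L / Real.sin ρ) * Real.sin ρ := by
      exact mul_le_mul_of_nonneg_left h1 (by positivity)
  _ = L := by field_simp
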